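/- Let Γ be a finite-index subgroup of SL(2,ℤ). Then every modular form of weight 0 for Γ is constant. That is, if f : ℍ → ℂ is holomorphic, satisfies f(γτ) = f(τ) for all γ ∈ Γ and τ ∈ ℍ, and for every γ ∈ SL(2,ℤ) the function τ ↦ f(γτ) is bounded as Im τ → ∞, then there is a constant c ∈ ℂ with f(τ) = c for all τ ∈ ℍ. -/

import Mathlib

open scoped Manifold MatrixGroups UpperHalfPlane
open Complex UpperHalfPlane

private lemma mdiff_comp_smul {f : ℍ → ℂ} (hf : MDifferentiable 𝓘(ℂ) 𝓘(ℂ) f) (g : SL(2, ℤ)) :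
    MDifferentiable 𝓘(ℂ) 𝓘(ℂ) (fun w : ℍ => f (g • w)) := by
  have h_open : IsOpen {z : ℂ | 0 < z.im} := isOpen_lt continuous_const Complex.continuous_im
  rw [mdifferentiable_iff] at hf ⊢
  intro z hz
  simp only [Set.mem_setOf_eq] at hz
  apply DifferentiableAt.differentiableWithinAt
  set σ : ℂ → ℂ := fun w => ((g 0 0 : ℂ) * w + (g 0 1 : ℂ)) / ((g 1 0 : ℂ) * w + (g 1 1 : ℂ))
    with hσdef
  have hcoe : ∀ w : ℂ, 0 < w.im → (↑(g • ofComplex w) : ℂ) = σ w := by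
    intro w hw
    rw [ofComplex_apply_of_im_pos hw, specialLinearGroup_apply]
    simp only [hσdef, coe_mk_subtype]
    norm_num
  have hdenom : ∀ w : ℂ, 0 < w.im → ((g 1 0 : ℂ) * w + (g 1 1 : ℂ)) ≠ 0 := by
    intro w hw
    have h1 := denom_ne_zero g (ofComplex w)
    rwa [ModularGroup.denom_apply, ofComplex_apply_of_im_pos hw, coe_mk_subtype] at h1
  have hσdiff : DifferentiableAt ℂ σ z :=
    ((differentiableAt_id.const_mul _).add_const _).div
      ((differentiableAt_id.const_mul _).add_const _) (hdenom z hz)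
  have him : 0 < (σ z).im := by
    rw [← hcoe z hz]
    exact (g • ofComplex z).im_pos
  have hfd : DifferentiableAt ℂ (f ∘ ofComplex) (σ z) :=
    (hf (σ z) him).differentiableAt (h_open.mem_nhds him)
  refine (hfd.comp z hσdiff).congr_of_eventuallyEq ?_
  filter_upwards [h_open.mem_nhds hz] with w hw
  simp only [Function.comp_apply]
  rw [← hcoe w hw, ofComplex_apply]

/-- Every modular form of weight 0 for a finite-index subgroup of `SL(2,ℤ)` is constant. -/
theorem stmt_8 (Γ : Subgroup SL(2, ℤ)) (hΓ : Γ.FiniteIndex)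
    (f : ℍ → ℂ)
    (hol : MDifferentiable 𝓘(ℂ) 𝓘(ℂ) f)
    (hinv : ∀ γ ∈ Γ, ∀ τ : ℍ, f (γ • τ) = f τ)
    (hbdd : ∀ γ : SL(2, ℤ), ∃ M A : ℝ,
      ∀ τ : ℍ, A ≤ τ.im → ‖f (γ • τ)‖ ≤ M) :
    ∃ c : ℂ, ∀ τ : ℍ, f τ = c := by
  classical
  haveI : Γ.FiniteIndex := hΓ
  haveI : Fintype (SL(2, ℤ) ⧸ Γ) := Fintype.ofFinite _
  have h_open : IsOpen {z : ℂ | 0 < z.im} := isOpen_lt continuous_const Complex.continuous_im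
  set F : SL(2, ℤ) → ℍ → ℂ := fun β w => f (β • w) with hFdef
  -- choose periods
  have hTmem : ∀ β : SL(2, ℤ), ∃ n : ℕ, 0 < n ∧ β * ModularGroup.T ^ n * β⁻¹ ∈ Γ := by
    intro β
    obtain ⟨n, hn0, -, hnmem⟩ :=
      Subgroup.exists_pow_mem_of_index_ne_zero hΓ.index_ne_zero (β * ModularGroup.T * β⁻¹)
    refine ⟨n, hn0, ?_⟩
    have h2 : (MulAut.conj β) (ModularGroup.T ^ n)
        = ((MulAut.conj β) ModularGroup.T) ^ n := map_pow _ _ _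
    simp only [MulAut.conj_apply] at h2
    rw [h2]
    exact hnmem
  choose N hN0 hNmem using hTmem
  have hNpos : ∀ β, (0:ℝ) < (N β : ℝ) := fun β => by exact_mod_cast hN0 β
  -- periodicity on ℍ
  have hperH : ∀ β (τ : ℍ), F β (((N β : ℝ)) +ᵥ τ) = F β τ := by
    intro β τ
    have h1 : ModularGroup.T ^ ((N β : ℤ)) • τ = ((N β : ℝ)) +ᵥ τ := by
      rw [UpperHalfPlane.modular_T_zpow_smul]; norm_num
    have h2 : β • (((N β : ℝ)) +ᵥ τ) = (β * ModularGroup.T ^ (N β) * β⁻¹) • (β • τ) := by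
      rw [← h1, ← mul_smul, ← mul_smul, inv_mul_cancel_right, zpow_natCast]
    simp only [hFdef]
    rw [h2, hinv _ (hNmem β)]
  -- periodicity on ℂ
  have hper : ∀ β, Function.Periodic (F β ∘ UpperHalfPlane.ofComplex) ((N β : ℝ)) := by
    intro β w
    by_cases hw : 0 < w.im
    · have hw' : 0 < (w + (N β : ℝ)).im := by simp [hw]
      have hv : UpperHalfPlane.mk (w + (N β : ℝ)) hw' = ((N β : ℝ)) +ᵥ UpperHalfPlane.mk w hw := by
        rw [UpperHalfPlane.ext_iff, UpperHalfPlane.coe_vadd, UpperHalfPlane.coe_mk,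
          UpperHalfPlane.coe_mk]
        ring
      simp only [Function.comp_apply, UpperHalfPlane.ofComplex_apply_of_im_pos hw',
        UpperHalfPlane.ofComplex_apply_of_im_pos hw]
      show F β (UpperHalfPlane.mk (w + (N β : ℝ)) hw') = F β (UpperHalfPlane.mk w hw)
      rw [hv, hperH]
    · have hw2 : (w + (N β : ℝ)).im ≤ 0 := by simpa using not_lt.mp hw
      simp only [Function.comp_apply,
        UpperHalfPlane.ofComplex_apply_eq_of_im_nonpos hw2 (not_lt.mp hw)]
  -- differentiability on ℂ
  have hdiffC : ∀ β, ∀ z : ℂ, 0 < z.im → DifferentiableAt ℂ (F β ∘ UpperHalfPlane.ofComplex) z :=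
    fun β z hz => ((UpperHalfPlane.mdifferentiable_iff.mp (mdiff_comp_smul hol β)) z hz
      ).differentiableAt (h_open.mem_nhds hz)
  -- boundedness
  have hbddC : ∀ β, Filter.BoundedAtFilter (Filter.comap Complex.im Filter.atTop)
      (F β ∘ UpperHalfPlane.ofComplex) := by
    intro β
    have h1 : UpperHalfPlane.IsBoundedAtImInfty (F β) := by
      rw [UpperHalfPlane.isBoundedAtImInfty_iff]
      obtain ⟨M, A, hMA⟩ := hbdd β
      exact ⟨M, A, fun z hz => hMA z hz⟩
    exact h1.comp_tendsto UpperHalfPlane.tendsto_comap_im_ofComplex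
  -- the cusp functions
  set Φ : SL(2, ℤ) → ℂ → ℂ :=
    fun β => Function.Periodic.cuspFunction (N β) (F β ∘ UpperHalfPlane.ofComplex) with hΦdef
  have hΦdiff : ∀ β (q : ℂ), ‖q‖ < 1 → DifferentiableAt ℂ (Φ β) q := by
    intro β q hq
    have hev : ∀ᶠ z in Filter.comap Complex.im Filter.atTop,
        DifferentiableAt ℂ (F β ∘ UpperHalfPlane.ofComplex) z :=
      Filter.eventually_of_mem (Filter.preimage_mem_comap (Filter.Ioi_mem_atTop 0))
        (fun z hz => hdiffC β z hz)
    rcases eq_or_ne q 0 with rfl | hq'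
    · exact (hper β).differentiableAt_cuspFunction_zero (hNpos β) hev (hbddC β)
    · rw [← Function.Periodic.qParam_right_inv (hNpos β).ne' hq']
      exact (hper β).differentiableAt_cuspFunction (hNpos β).ne'
        (hdiffC β _ (Function.Periodic.im_invQParam_pos_of_norm_lt_one (hNpos β) hq hq'))
  have hΦeq : ∀ β (τ : ℍ), Φ β (Function.Periodic.qParam ((N β : ℝ)) ↑τ) = F β τ := by
    intro β τ
    have h1 := Function.Periodic.eq_cuspFunction (hNpos β).ne' (hper β) ↑τ
    simpa only [Function.comp_apply, UpperHalfPlane.ofComplex_apply] using h1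
  -- radii
  set r : SL(2, ℤ) → ℝ := fun β => Real.exp (-Real.pi / (N β)) with hrdef
  have hr0 : ∀ β, 0 ≤ r β := fun β => (Real.exp_pos _).le
  have hr1 : ∀ β, r β < 1 := fun β => by
    rw [hrdef, Real.exp_lt_one_iff]
    exact div_neg_of_neg_of_pos (neg_neg_of_pos Real.pi_pos) (hNpos β)
  have hqmem : ∀ β (w : ℍ), 1/2 ≤ w.im →
      Function.Periodic.qParam ((N β : ℝ)) ↑w ∈ Metric.closedBall (0:ℂ) (r β) := by
    intro β w hw
    rw [Metric.mem_closedBall, dist_zero_right,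
      Function.Periodic.norm_qParam, hrdef]
    apply Real.exp_le_exp.mpr
    rw [div_le_div_iff₀ (hNpos β) (hNpos β), UpperHalfPlane.coe_im]
    nlinarith [mul_nonneg (by linarith : (0:ℝ) ≤ w.im - 1/2)
      (le_of_lt (mul_pos Real.two_pi_pos (hNpos β)))]
  -- maxima on closed balls
  have hmax : ∀ β, ∃ q ∈ Metric.closedBall (0:ℂ) (r β),
      IsMaxOn (fun x => ‖Φ β x‖) (Metric.closedBall (0:ℂ) (r β)) q := by
    intro β
    apply (isCompact_closedBall (0:ℂ) (r β)).exists_isMaxOn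
      ⟨0, Metric.mem_closedBall_self (hr0 β)⟩
    intro q hq
    rw [Metric.mem_closedBall, dist_zero_right] at hq
    have : ‖q‖ < 1 := by
      exact lt_of_le_of_lt hq (hr1 β)
    exact ((hΦdiff β q this).continuousAt.norm).continuousWithinAt
  choose qm hqm_mem hqm_max using hmax
  -- the supremum
  have hne : (Finset.univ : Finset (SL(2, ℤ) ⧸ Γ)).Nonempty := Finset.univ_nonempty
  set B : (SL(2, ℤ) ⧸ Γ) → SL(2, ℤ) := fun c => (Quotient.out c)⁻¹ with hBdef
  set s : ℝ := Finset.univ.sup' hne (fun c => ‖Φ (B c) (qm (B c))‖) with hsdef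
  have hFs : ∀ c (w : ℍ), 1/2 ≤ w.im → ‖F (B c) w‖ ≤ s := by
    intro c w hw
    rw [← hΦeq (B c) w]
    calc ‖Φ (B c) (Function.Periodic.qParam ((N (B c) : ℝ)) ↑w)‖
        ≤ ‖Φ (B c) (qm (B c))‖ := hqm_max (B c) (hqmem (B c) w hw)
      _ ≤ s := Finset.le_sup' (f := fun c => ‖Φ (B c) (qm (B c))‖) (Finset.mem_univ c)
  have hfs : ∀ τ : ℍ, ‖f τ‖ ≤ s := by
    intro τ
    obtain ⟨δ, hδ⟩ := ModularGroup.exists_one_half_le_im_smul τ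
    obtain ⟨g, hg⟩ := QuotientGroup.mk_out_eq_mul Γ δ
    have key : F (B (QuotientGroup.mk δ)) (δ • τ) = f τ := by
      simp only [hFdef, hBdef, hg, mul_inv_rev, mul_smul]
      rw [hinv _ (Subgroup.inv_mem _ g.2), inv_smul_smul]
    rw [← key]
    exact hFs _ (δ • τ) hδ
  have hΦs : ∀ c (q : ℂ), ‖q‖ < 1 → ‖Φ (B c) q‖ ≤ s := by
    have h_ne : ∀ c (q : ℂ), ‖q‖ < 1 → q ≠ 0 → ‖Φ (B c) q‖ ≤ s := by
      intro c q hq hq'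
      have him := Function.Periodic.im_invQParam_pos_of_norm_lt_one (hNpos (B c)) hq hq'
      simp only [hΦdef]
      rw [Function.Periodic.cuspFunction_eq_of_nonzero _ _ hq', Function.comp_apply,
        UpperHalfPlane.ofComplex_apply_of_im_pos him]
      simp only [hFdef]
      exact hfs _
    intro c q hq
    rcases eq_or_ne q 0 with rfl | hq'
    · have h1 : Filter.Tendsto (fun x : ℂ => ‖Φ (B c) x‖) (nhdsWithin 0 {(0:ℂ)}ᶜ)
          (nhds ‖Φ (B c) 0‖) :=
        (((hΦdiff (B c) 0 (by simp)).continuousAt).norm).continuousWithinAt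
      refine le_of_tendsto h1 ?_
      have hball : Metric.ball (0:ℂ) 1 ∈ nhdsWithin (0:ℂ) {(0:ℂ)}ᶜ :=
        nhdsWithin_le_nhds (Metric.ball_mem_nhds _ one_pos)
      filter_upwards [hball, self_mem_nhdsWithin] with x hx hx0
      rw [mem_ball_zero_iff] at hx
      exact h_ne c x hx hx0
    · exact h_ne c q hq hq'
  -- attainment of the supremum
  obtain ⟨c0, -, hc0⟩ := Finset.exists_mem_eq_sup' hne
      (fun c => ‖Φ (B c) (qm (B c))‖)
  have hq0ball : qm (B c0) ∈ Metric.ball (0:ℂ) 1 := by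
    have h1 := hqm_mem (B c0)
    rw [Metric.mem_closedBall, dist_zero_right] at h1
    rw [Metric.mem_ball, dist_zero_right]
    exact lt_of_le_of_lt h1 (hr1 (B c0))
  have hmaxon : IsMaxOn (norm ∘ (Φ (B c0))) (Metric.ball (0:ℂ) 1) (qm (B c0)) := by
    intro x hx
    rw [mem_ball_zero_iff] at hx
    calc (norm ∘ (Φ (B c0))) x ≤ s := hΦs c0 x hx
      _ = ‖Φ (B c0) (qm (B c0))‖ := hc0
  -- maximum modulus principle
  have heq := Complex.eqOn_of_isPreconnected_of_isMaxOn_norm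
      (convex_ball (0:ℂ) 1).isPreconnected Metric.isOpen_ball
      (fun x hx => (hΦdiff (B c0) x (by
        rw [mem_ball_zero_iff] at hx; exact hx)).differentiableWithinAt)
      hq0ball hmaxon
  refine ⟨Φ (B c0) (qm (B c0)), fun τ => ?_⟩
  have h1 : f τ = F (B c0) (Quotient.out c0 • τ) := by
    simp only [hFdef, hBdef, inv_smul_smul]
  have hmem : Function.Periodic.qParam ((N (B c0)):ℝ) ↑(Quotient.out c0 • τ)
      ∈ Metric.ball (0:ℂ) 1 := by
    rw [Metric.mem_ball, dist_zero_right, Function.Periodic.norm_qParam,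
      Real.exp_lt_one_iff]
    apply div_neg_of_neg_of_pos _ (hNpos _)
    rw [UpperHalfPlane.coe_im]
    nlinarith [Real.pi_pos, (Quotient.out c0 • τ).im_pos]
  have h2 := heq hmem
  rw [h1, ← hΦeq (B c0) (Quotient.out c0 • τ), h2]
  simp
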